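/- Let G be a graph with no 2-factor and (A,B) a biased barrier of G. If H is a component of G − (A ∪ B) with e(H,B) odd, then every vertex v ∈ B has at most one neighbor in H, and every vertex of H has at most one neighbor in B. -/

import Mathlib

open SimpleGraph

variable {V : Type*}

/-- The number of (ordered) pairs giving edges between `X` and `Y`;
for disjoint `X`, `Y` this is the number of edges between `X` and `Y`. -/
noncomputable def eB (G : SimpleGraph V) (X Y : Set V) : ℕ :=
  Set.ncard {p : V × V | p.1 ∈ X ∧ p.2 ∈ Y ∧ G.Adj p.1 p.2}

/-- The vertex set (in `V`) of a connected component of the induced subgraph on `U`. -/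
def compSupp (G : SimpleGraph V) (U : Set V)
    (C : (G.induce U).ConnectedComponent) : Set V :=
  Subtype.val '' C.supp

/-- `δ(A,B) = 2|A| - 2|B| + ∑_{v ∈ B} d_{G-A}(v) - o(A,B)`, where `o(A,B)` is the
number of components of `G - (A ∪ B)` sending an odd number of edges to `B`. -/
noncomputable def deltaAB (G : SimpleGraph V) (A B : Set V) : ℤ :=
  2 * A.ncard - 2 * B.ncard + eB G B Aᶜ -
    Nat.card {C : (G.induce (A ∪ B)ᶜ).ConnectedComponent //
      Odd (eB G (compSupp G (A ∪ B)ᶜ C) B)}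

/-- A barrier (Tutte pair) of `G`. -/
def IsBarrier (G : SimpleGraph V) (A B : Set V) : Prop :=
  Disjoint A B ∧ deltaAB G A B ≤ -2

/-- A biased barrier: a barrier maximizing `|A|` and, subject to that, minimizing `|B|`. -/
def IsBiasedBarrier (G : SimpleGraph V) (A B : Set V) : Prop :=
  IsBarrier G A B ∧
    ∀ A' B' : Set V, IsBarrier G A' B' →
      A'.ncard ≤ A.ncard ∧ (A'.ncard = A.ncard → B.ncard ≤ B'.ncard)

/-- A `2`-factor is a `2`-regular spanning subgraph. -/
def HasTwoFactor (G : SimpleGraph V) : Prop :=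
  ∃ H : SimpleGraph V, H ≤ G ∧ ∀ v : V, (H.neighborSet v).ncard = 2

/-- The number of components of `G - S`. -/
noncomputable def numComp (G : SimpleGraph V) (S : Set V) : ℕ :=
  Nat.card ((G.induce Sᶜ).ConnectedComponent)

/-- `G` is `t`-tough: every vertex cut `S` satisfies `|S| ≥ t · c(G - S)`. -/
def Tough (t : ℝ) (G : SimpleGraph V) : Prop :=
  ∀ S : Set V, 2 ≤ numComp G S → t * (numComp G S : ℝ) ≤ (S.ncard : ℝ)

/-- The toughness `τ(G) = min_S |S| / c(G - S)` over vertex cuts `S`. -/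
noncomputable def toughness (G : SimpleGraph V) : ℝ :=
  sInf {r : ℝ | ∃ S : Set V, 2 ≤ numComp G S ∧ r = (S.ncard : ℝ) / (numComp G S : ℝ)}

/-- `G` is `k`-connected. -/
def KConnected (k : ℕ) (G : SimpleGraph V) : Prop :=
  k < Nat.card V ∧ ∀ S : Set V, S.ncard < k → (G.induce Sᶜ).Connected

/-- The independence number `α(G)`. -/
noncomputable def indepNum (G : SimpleGraph V) : ℕ :=
  sSup {n : ℕ | ∃ s : Set V, (∀ u ∈ s, ∀ v ∈ s, ¬ G.Adj u v) ∧ s.ncard = n}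

/-- The minimum degree `δ(G)`. -/
noncomputable def minDeg (G : SimpleGraph V) : ℕ :=
  sInf {d : ℕ | ∃ v : V, (G.neighborSet v).ncard = d}

/-- `H` occurs as an induced subgraph of `G`. -/
def IsInducedCopy {W : Type*} (H : SimpleGraph W) (G : SimpleGraph V) : Prop :=
  ∃ f : W ↪ V, ∀ a b : W, G.Adj (f a) (f b) ↔ H.Adj a b

/-- The disjoint union `P_m ∪ k·P_1` of a path on `m` vertices and `k` isolated vertices. -/
def pathUnion (m k : ℕ) : SimpleGraph (Fin m ⊕ Fin k) where
  Adj a b := ∃ i j : Fin m, a = Sum.inl i ∧ b = Sum.inl j ∧ (pathGraph m).Adj i j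
  symm := by constructor; rintro a b ⟨i, j, rfl, rfl, h⟩; exact ⟨j, i, rfl, rfl, h.symm⟩
  loopless := by
    constructor
    rintro a ⟨i, j, rfl, hj, h⟩
    obtain rfl := Sum.inl.inj hj
    exact (pathGraph m).loopless.irrefl i h

/-- The join `G ∨ H` of two graphs. -/
def joinG {α β : Type*} (G : SimpleGraph α) (H : SimpleGraph β) :
    SimpleGraph (α ⊕ β) where
  Adj x y :=
    match x, y with
    | Sum.inl a, Sum.inl b => G.Adj a b
    | Sum.inr a, Sum.inr b => H.Adj a b
    | _, _ => True
  symm := by constructor; rintro (a | a) (b | b) h <;> simp_all <;> exact h.symm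
  loopless := by constructor; rintro (a | a) h <;> simp_all

/-- `a` disjoint copies of the complete graph `K_b`. -/
def cliquesG (a b : ℕ) : SimpleGraph (Fin a × Fin b) where
  Adj p q := p.1 = q.1 ∧ p.2 ≠ q.2
  symm := by constructor; rintro p q ⟨h1, h2⟩; exact ⟨h1.symm, h2.symm⟩
  loopless := by constructor; rintro p ⟨_, h⟩; exact h rfl

/-- The graph `H_n`: `K_n ∨ (K̄_{2n+1} ∪ K_{2n+1})` together with a perfect matching
between the independent part and the clique part. -/
def Hgraph (n : ℕ) :
    SimpleGraph (Fin n ⊕ (Fin (2 * n + 1) ⊕ Fin (2 * n + 1))) where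
  Adj x y := x ≠ y ∧
    match x, y with
    | Sum.inl _, _ => True
    | _, Sum.inl _ => True
    | Sum.inr (Sum.inl _), Sum.inr (Sum.inl _) => False
    | Sum.inr (Sum.inr _), Sum.inr (Sum.inr _) => True
    | Sum.inr (Sum.inl i), Sum.inr (Sum.inr j) => i = j
    | Sum.inr (Sum.inr i), Sum.inr (Sum.inl j) => i = j
  symm := by
    constructor
    rintro (a | a | a) (b | b | b) ⟨hne, h⟩ <;>
      exact ⟨Ne.symm hne, by simp_all⟩
  loopless := by constructor; rintro x ⟨hne, _⟩; exact hne rfl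


section Aux
open scoped Classical
variable {V : Type*}

lemma mem_compSupp {G : SimpleGraph V} {U : Set V} {C : (G.induce U).ConnectedComponent}
    {x : V} : x ∈ compSupp G U C ↔
      ∃ h : x ∈ U, (G.induce U).connectedComponentMk ⟨x, h⟩ = C := by
  constructor
  · rintro ⟨⟨y, hy⟩, hmem, rfl⟩; exact ⟨hy, hmem⟩
  · rintro ⟨h, hmk⟩; exact ⟨⟨x, h⟩, hmk, rfl⟩

lemma compSupp_subset (G : SimpleGraph V) (U : Set V) (C : (G.induce U).ConnectedComponent) :
    compSupp G U C ⊆ U := by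
  rintro x ⟨⟨y, hy⟩, _, rfl⟩; exact hy

lemma compSupp_nonempty (G : SimpleGraph V) (U : Set V)
    (C : (G.induce U).ConnectedComponent) : (compSupp G U C).Nonempty := by
  obtain ⟨⟨v, hv⟩, hmk⟩ := C.exists_rep
  exact ⟨v, mem_compSupp.2 ⟨hv, hmk⟩⟩

lemma compSupp_injective {G : SimpleGraph V} {U : Set V}
    {C D : (G.induce U).ConnectedComponent} (h : compSupp G U C = compSupp G U D) :
    C = D := by
  apply ConnectedComponent.supp_injective
  have := Set.image_injective.2 (Subtype.val_injective (p := fun x => x ∈ U))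
  exact this h

lemma compSupp_eq_of_mem {G : SimpleGraph V} {U : Set V}
    {C D : (G.induce U).ConnectedComponent} {x : V}
    (hC : x ∈ compSupp G U C) (hD : x ∈ compSupp G U D) : C = D := by
  obtain ⟨h1, hm1⟩ := mem_compSupp.1 hC
  obtain ⟨h2, hm2⟩ := mem_compSupp.1 hD
  rw [← hm1, ← hm2]

lemma compSupp_closed {G : SimpleGraph V} {U : Set V}
    {C : (G.induce U).ConnectedComponent} {x y : V}
    (hx : x ∈ compSupp G U C) (hy : y ∈ U) (hadj : G.Adj x y) :
    y ∈ compSupp G U C := by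
  obtain ⟨hxU, hmk⟩ := mem_compSupp.1 hx
  refine mem_compSupp.2 ⟨hy, ?_⟩
  rw [← hmk]
  exact ConnectedComponent.connectedComponentMk_eq_of_adj (by exact hadj.symm : (G.induce U).Adj ⟨y, hy⟩ ⟨x, hxU⟩)

lemma mem_compSupp_self {G : SimpleGraph V} {U : Set V} {x : V} (h : x ∈ U) :
    x ∈ compSupp G U ((G.induce U).connectedComponentMk ⟨x, h⟩) :=
  mem_compSupp.2 ⟨h, rfl⟩

/-- walk induction helper -/
lemma walk_closed {W : Type*} {G' : SimpleGraph W} {P : W → Prop}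
    (h : ∀ a b, G'.Adj a b → P a → P b) {a b : W} (w : G'.Walk a b) : P a → P b := by
  induction w with
  | nil => exact id
  | cons hadj _ ih => exact fun hp => ih (h _ _ hadj hp)

/-- The transfer lemma: a component support that fits inside `U'` and is adjacency-closed
w.r.t. `U'` is also a component support of `G.induce U'`. -/
lemma comp_transfer {G : SimpleGraph V} {U U' : Set V}
    (C : (G.induce U).ConnectedComponent)
    (hsub : compSupp G U C ⊆ U')
    (hclosed : ∀ x ∈ compSupp G U C, ∀ y ∈ U', G.Adj x y → y ∈ compSupp G U C) :
    ∃ C' : (G.induce U').ConnectedComponent, compSupp G U' C' = compSupp G U C := by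
  obtain ⟨v, hv⟩ := compSupp_nonempty G U C
  have hvU' : v ∈ U' := hsub hv
  refine ⟨(G.induce U').connectedComponentMk ⟨v, hvU'⟩, ?_⟩
  ext x
  constructor
  · -- x in new component of v ⇒ x ∈ compSupp C
    intro hx
    obtain ⟨hxU', hmk⟩ := mem_compSupp.1 hx
    have hreach : (G.induce U').Reachable ⟨v, hvU'⟩ ⟨x, hxU'⟩ :=
      (ConnectedComponent.eq.1 hmk).symm
    obtain ⟨w⟩ := hreach
    exact walk_closed (P := fun z : ↥U' => (z : V) ∈ compSupp G U C)
      (fun a b hadj hp => hclosed a hp b b.2 hadj) w hv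
  · -- x ∈ compSupp C ⇒ reachable in U'
    intro hx
    obtain ⟨hxU, hmkx⟩ := mem_compSupp.1 hx
    obtain ⟨hvU, hmkv⟩ := mem_compSupp.1 hv
    have hreach : (G.induce U).Reachable ⟨v, hvU⟩ ⟨x, hxU⟩ :=
      ConnectedComponent.eq.1 (hmkv.trans hmkx.symm)
    obtain ⟨w⟩ := hreach
    have key := walk_closed (P := fun z : ↥U => (z : V) ∈ compSupp G U C ∧
        ∃ hz : (z : V) ∈ U', (G.induce U').Reachable ⟨v, hvU'⟩ ⟨(z : V), hz⟩)
      (fun a b hadj hp => by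
        obtain ⟨haC, haU', hra⟩ := hp
        have hbC : (b : V) ∈ compSupp G U C := compSupp_closed haC b.2 hadj
        have hbU' : (b : V) ∈ U' := hsub hbC
        refine ⟨hbC, hbU', hra.trans (Adj.reachable ?_)⟩
        exact (hadj : G.Adj (a : V) (b : V)))
      w ⟨hv, hvU', Reachable.refl _⟩
    obtain ⟨_, hxU', hr⟩ := key
    exact mem_compSupp.2 ⟨hxU', (ConnectedComponent.eq.2 hr.symm)⟩


lemma eB_comm (G : SimpleGraph V) (X Y : Set V) : eB G X Y = eB G Y X := by
  unfold eB
  have h : {p : V × V | p.1 ∈ Y ∧ p.2 ∈ X ∧ G.Adj p.1 p.2} =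
      Prod.swap '' {p : V × V | p.1 ∈ X ∧ p.2 ∈ Y ∧ G.Adj p.1 p.2} := by
    ext ⟨a, b⟩
    simp only [Set.mem_setOf_eq, Set.mem_image, Prod.exists, Prod.swap_prod_mk,
      Prod.mk.injEq]
    constructor
    · rintro ⟨ha, hb, hadj⟩; exact ⟨b, a, ⟨hb, ha, hadj.symm⟩, rfl, rfl⟩
    · rintro ⟨x, y, ⟨hx, hy, hadj⟩, rfl, rfl⟩; exact ⟨hy, hx, hadj.symm⟩
  rw [h, Set.ncard_image_of_injective _ Prod.swap_injective]

lemma eB_union_right [Fintype V] (G : SimpleGraph V) (X Y₁ Y₂ : Set V)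
    (h : Disjoint Y₁ Y₂) : eB G X (Y₁ ∪ Y₂) = eB G X Y₁ + eB G X Y₂ := by
  unfold eB
  have hset : {p : V × V | p.1 ∈ X ∧ p.2 ∈ Y₁ ∪ Y₂ ∧ G.Adj p.1 p.2} =
      {p : V × V | p.1 ∈ X ∧ p.2 ∈ Y₁ ∧ G.Adj p.1 p.2} ∪
      {p : V × V | p.1 ∈ X ∧ p.2 ∈ Y₂ ∧ G.Adj p.1 p.2} := by
    ext ⟨a, b⟩; simp only [Set.mem_setOf_eq, Set.mem_union]; tauto
  rw [hset, Set.ncard_union_eq _ (Set.toFinite _) (Set.toFinite _)]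
  rw [Set.disjoint_left]
  rintro ⟨a, b⟩ ⟨_, h1, _⟩ ⟨_, h2, _⟩
  exact h.le_bot ⟨h1, h2⟩ |>.elim

lemma eB_union_left [Fintype V] (G : SimpleGraph V) (X₁ X₂ Y : Set V)
    (h : Disjoint X₁ X₂) : eB G (X₁ ∪ X₂) Y = eB G X₁ Y + eB G X₂ Y := by
  rw [eB_comm, eB_union_right G Y X₁ X₂ h, eB_comm G Y X₁, eB_comm G Y X₂]

lemma eB_singleton_right (G : SimpleGraph V) (X : Set V) (v : V) :
    eB G X {v} = (G.neighborSet v ∩ X).ncard := by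
  unfold eB
  have h : {p : V × V | p.1 ∈ X ∧ p.2 ∈ ({v} : Set V) ∧ G.Adj p.1 p.2} =
      (fun x => (x, v)) '' (G.neighborSet v ∩ X) := by
    ext ⟨a, b⟩
    simp only [Set.mem_setOf_eq, Set.mem_singleton_iff, Set.mem_image, Set.mem_inter_iff,
      mem_neighborSet, Prod.mk.injEq]
    constructor
    · rintro ⟨ha, rfl, hadj⟩; exact ⟨a, ⟨hadj.symm, ha⟩, rfl, rfl⟩
    · rintro ⟨x, ⟨hadj, hx⟩, rfl, rfl⟩; exact ⟨hx, rfl, hadj.symm⟩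
  rw [h, Set.ncard_image_of_injective]
  intro a b hab; exact (Prod.mk.injEq _ _ _ _ ▸ hab).1

lemma eB_singleton_left (G : SimpleGraph V) (Y : Set V) (v : V) :
    eB G {v} Y = (G.neighborSet v ∩ Y).ncard := by
  rw [eB_comm, eB_singleton_right]

lemma eB_eq_zero (G : SimpleGraph V) (X Y : Set V)
    (h : ∀ x ∈ X, ∀ y ∈ Y, ¬ G.Adj x y) : eB G X Y = 0 := by
  unfold eB
  have : {p : V × V | p.1 ∈ X ∧ p.2 ∈ Y ∧ G.Adj p.1 p.2} = ∅ := by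
    ext ⟨a, b⟩
    simp only [Set.mem_setOf_eq, Set.mem_empty_iff_false, iff_false, not_and]
    intro ha hb hadj; exact h a ha b hb hadj
  rw [this, Set.ncard_empty]


lemma eB_eq_filter [Fintype V] (G : SimpleGraph V) (X Y : Set V) :
    eB G X Y = (Finset.univ.filter
      (fun p : V × V => p.1 ∈ X ∧ p.2 ∈ Y ∧ G.Adj p.1 p.2)).card := by
  rw [eB, ← Set.ncard_coe_finset]
  congr 1
  ext ⟨a, b⟩
  simp

lemma natCard_filter {α : Type*} [Fintype α] (p : α → Prop) :
    Nat.card {x // p x} = (Finset.univ.filter p).card := by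
  rw [Nat.card_eq_fintype_card, Fintype.card_subtype]

lemma eB_sum_comps [Fintype V] (G : SimpleGraph V) (B U : Set V)
    [Fintype ((G.induce U).ConnectedComponent)] :
    eB G B U = ∑ C : (G.induce U).ConnectedComponent, eB G B (compSupp G U C) := by
  rcases isEmpty_or_nonempty ((G.induce U).ConnectedComponent) with he | hn
  · have hU : U = ∅ := by
      by_contra hne
      obtain ⟨x, hx⟩ := Set.nonempty_iff_ne_empty.2 hne
      exact he.elim ((G.induce U).connectedComponentMk ⟨x, hx⟩)
    subst hU
    rw [Finset.univ_eq_empty, Finset.sum_empty, eB_eq_filter]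
    convert Finset.card_empty
    ext ⟨a, b⟩
    simp
  · let f : V × V → (G.induce U).ConnectedComponent := fun p =>
      if h : p.2 ∈ U then (G.induce U).connectedComponentMk ⟨p.2, h⟩
      else Classical.arbitrary _
    rw [eB_eq_filter]
    rw [Finset.card_eq_sum_card_fiberwise (f := f) (t := Finset.univ)
      (fun x _ => Finset.mem_univ _)]
    apply Finset.sum_congr rfl
    intro C _
    rw [eB_eq_filter, Finset.filter_filter]
    congr 1
    ext ⟨a, b⟩
    simp only [Finset.mem_filter, Finset.mem_univ, true_and]
    constructor
    · rintro ⟨⟨ha, hb, hadj⟩, hf⟩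
      refine ⟨ha, ?_, hadj⟩
      rw [mem_compSupp]
      simp only [f, dif_pos hb] at hf
      exact ⟨hb, hf⟩
    · rintro ⟨ha, hb, hadj⟩
      have hbU : b ∈ U := compSupp_subset G U C hb
      obtain ⟨h', hmk⟩ := mem_compSupp.1 hb
      refine ⟨⟨ha, hbU, hadj⟩, ?_⟩
      simp only [f, dif_pos hbU]
      exact hmk
lemma eB_self_even [Fintype V] (G : SimpleGraph V) (B : Set V) : Even (eB G B B) := by
  classical
  have e1 : eB G B B = Nat.card {p : V × V | p.1 ∈ B ∧ p.2 ∈ B ∧ G.Adj p.1 p.2} :=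
    (Nat.card_coe_set_eq _).symm
  let f : {p : V × V | p.1 ∈ B ∧ p.2 ∈ B ∧ G.Adj p.1 p.2} → (G.induce B).Dart :=
    fun x => ⟨(⟨x.1.1, x.2.1⟩, ⟨x.1.2, x.2.2.1⟩), x.2.2.2⟩
  have hf : Function.Bijective f := by
    constructor
    · rintro ⟨⟨a, b⟩, ha, hb, hab⟩ ⟨⟨c, d⟩, hc, hd, hcd⟩ h
      simp only [f, Dart.mk.injEq, Prod.mk.injEq, Subtype.mk.injEq] at h
      have h1 := congrArg (fun d => (d.fst : V)) h
      have h2 := congrArg (fun d => (d.snd : V)) h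
      simp only at h1 h2
      simp [Prod.ext_iff, h1, h2]
    · rintro ⟨⟨⟨a, ha⟩, ⟨b, hb⟩⟩, hab⟩
      exact ⟨⟨(a, b), ha, hb, hab⟩, rfl⟩
  rw [e1, Nat.card_eq_of_bijective f hf, Nat.card_eq_fintype_card,
    dart_card_eq_twice_card_edges]
  exact even_two_mul _

lemma deltaAB_even [Fintype V] (G : SimpleGraph V) {A B : Set V} (h : Disjoint A B) :
    Even (deltaAB G A B) := by
  set S := (A ∪ B)ᶜ with hS
  haveI : Fintype ((G.induce S).ConnectedComponent) := Fintype.ofFinite _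
  have hA : Aᶜ = B ∪ S := by
    ext x
    simp only [Set.mem_compl_iff, Set.mem_union, hS]
    constructor
    · intro hx
      by_cases hxB : x ∈ B
      · exact Or.inl hxB
      · exact Or.inr (by simp [hx, hxB])
    · rintro (hxB | hxS)
      · exact fun hxA => h.le_bot ⟨hxA, hxB⟩
      · intro hxA; exact hxS (Or.inl hxA)
  have hBS : Disjoint B S := by
    rw [Set.disjoint_left]
    intro x hxB hxS
    exact hxS (Or.inr hxB)
  have hsplit : eB G B Aᶜ = eB G B B + eB G B S := by
    rw [hA, eB_union_right G B B S hBS]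
  have hsum : eB G B S = ∑ C : (G.induce S).ConnectedComponent,
      eB G B (compSupp G S C) := eB_sum_comps G B S
  have ho : Nat.card {C : (G.induce S).ConnectedComponent //
      Odd (eB G (compSupp G S C) B)} =
      (Finset.univ.filter (fun C : (G.induce S).ConnectedComponent =>
        Odd (eB G B (compSupp G S C)))).card := by
    rw [Nat.card_eq_of_bijective _ (Equiv.subtypeEquivRight
      (fun C => by rw [eB_comm] : ∀ C, Odd (eB G (compSupp G S C) B) ↔
        Odd (eB G B (compSupp G S C)))).bijective, natCard_filter]
    convert rfl
  have hEo : Even (eB G B Aᶜ) ↔ Even (Nat.card {C : (G.induce S).ConnectedComponent //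
      Odd (eB G (compSupp G S C) B)}) := by
    rw [hsplit, Nat.even_add, ho, hsum, Finset.even_sum_iff_even_card_odd]
    simp [eB_self_even G B]
  have hδ : deltaAB G A B = (2 * (A.ncard : ℤ) - 2 * B.ncard) +
      ((eB G B Aᶜ : ℤ) - (Nat.card {C : (G.induce S).ConnectedComponent //
        Odd (eB G (compSupp G S C) B)} : ℤ)) := by
    unfold deltaAB
    ring
  rw [hδ]
  refine Even.add ?_ ?_
  · exact (even_two_mul (A.ncard : ℤ)).sub (even_two_mul _)
  · rw [Int.even_sub]
    constructor
    · intro hE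
      exact (Int.even_coe_nat _).2 (hEo.1 ((Int.even_coe_nat _).1 hE))
    · intro hE
      exact (Int.even_coe_nat _).2 (hEo.2 ((Int.even_coe_nat _).1 hE))
lemma natCard_le_of_transfer {α β : Type*} [Finite β] (p : α → Prop) (q : β → Prop)
    (F : α → Set V) (G' : β → Set V)
    (h : ∀ a, p a → ∃ b, G' b = F a ∧ q b)
    (hFinj : ∀ a a', p a → p a' → F a = F a' → a = a') :
    Nat.card {x // p x} ≤ Nat.card {y // q y} := by
  have key : ∀ x : {x // p x}, ∃ b, G' b = F x.1 ∧ q b := fun x => h x.1 x.2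
  apply Nat.card_le_card_of_injective
    (fun x => (⟨(key x).choose, (key x).choose_spec.2⟩ : {y // q y}))
  intro x y hxy
  have h1 := (key x).choose_spec.1
  have h2 := (key y).choose_spec.1
  apply Subtype.ext
  apply hFinj _ _ x.2 y.2
  rw [← h1, ← h2]
  exact congrArg (fun z : {y // q y} => G' z.1) hxy

lemma natCard_split {α : Type*} [Fintype α] (p q : α → Prop) :
    Nat.card {x // p x} = Nat.card {x // p x ∧ q x} + Nat.card {x // p x ∧ ¬ q x} := by
  rw [natCard_filter, natCard_filter, natCard_filter]
  rw [← Finset.card_filter_add_card_filter_not (s := Finset.univ.filter p) q]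
  congr 1 <;> · rw [Finset.filter_filter]; convert rfl

lemma natCard_le_one {α : Type*} [Finite α] (p : α → Prop)
    (h : ∀ x y, p x → p y → x = y) : Nat.card {x // p x} ≤ 1 := by
  haveI : Subsingleton {x // p x} := ⟨fun a b => Subtype.ext (h _ _ a.2 b.2)⟩
  exact Finite.card_le_one_iff_subsingleton.mpr inferInstance


lemma surgery_b [Fintype V] (G : SimpleGraph V) (A B : Set V)
    (hAB : IsBiasedBarrier G A B)
    (C : (G.induce (A ∪ B)ᶜ).ConnectedComponent)
    (u : V) (hu : u ∈ compSupp G (A ∪ B)ᶜ C)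
    (h2 : 2 ≤ (G.neighborSet u ∩ B).ncard) : False := by
  classical
  have huS : u ∈ (A ∪ B)ᶜ := compSupp_subset G (A ∪ B)ᶜ C hu
  have huA : u ∉ A := fun h => huS (Or.inl h)
  have huB : u ∉ B := fun h => huS (Or.inr h)
  set A' := A ∪ {u} with hA'def
  set U' := (A' ∪ B)ᶜ with hU'def
  have hU' : ∀ x, x ∈ U' ↔ x ∈ (A ∪ B)ᶜ ∧ x ≠ u := by
    intro x
    simp only [hU'def, hA'def, Set.mem_compl_iff, Set.mem_union,
      Set.mem_singleton_iff]
    tauto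
  haveI : Fintype ((G.induce (A ∪ B)ᶜ).ConnectedComponent) := Fintype.ofFinite _
  haveI : Fintype ((G.induce U').ConnectedComponent) := Fintype.ofFinite _
  set o := Nat.card {D : (G.induce (A ∪ B)ᶜ).ConnectedComponent //
    Odd (eB G (compSupp G (A ∪ B)ᶜ D) B)} with hodef
  set o' := Nat.card {D : (G.induce U').ConnectedComponent //
    Odd (eB G (compSupp G U' D) B)} with ho'def
  -- split o
  have hsplit := natCard_split
    (fun D : (G.induce (A ∪ B)ᶜ).ConnectedComponent => Odd (eB G (compSupp G (A ∪ B)ᶜ D) B))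
    (fun D => u ∈ compSupp G (A ∪ B)ᶜ D)
  have h1 : Nat.card {D : (G.induce (A ∪ B)ᶜ).ConnectedComponent //
      Odd (eB G (compSupp G (A ∪ B)ᶜ D) B) ∧ u ∈ compSupp G (A ∪ B)ᶜ D} ≤ 1 :=
    natCard_le_one _ (fun X Y hX hY => compSupp_eq_of_mem hX.2 hY.2)
  -- transfer
  have htrans : Nat.card {D : (G.induce (A ∪ B)ᶜ).ConnectedComponent //
      Odd (eB G (compSupp G (A ∪ B)ᶜ D) B) ∧ ¬ u ∈ compSupp G (A ∪ B)ᶜ D} ≤ o' := by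
    rw [ho'def]
    refine natCard_le_of_transfer _ _ (compSupp G (A ∪ B)ᶜ) (compSupp G U') ?_
      (fun a a' _ _ h => compSupp_injective h)
    rintro D ⟨hoD, hnD⟩
    have hsub : compSupp G (A ∪ B)ᶜ D ⊆ U' := by
      intro x hx
      refine (hU' x).2 ⟨compSupp_subset G (A ∪ B)ᶜ D hx, ?_⟩
      rintro rfl; exact hnD hx
    obtain ⟨D', hD'⟩ := comp_transfer D hsub
      (fun x hx y hy hadj => compSupp_closed hx ((hU' y).1 hy).1 hadj)
    exact ⟨D', hD', by rw [hD']; exact hoD⟩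
  -- edge counts
  have huA' : u ∈ A' := Or.inr rfl
  have hAc : Aᶜ = A'ᶜ ∪ {u} := by
    ext x
    simp only [Set.mem_compl_iff, Set.mem_union, Set.mem_singleton_iff, hA'def]
    constructor
    · intro hx
      by_cases hxu : x = u
      · exact Or.inr hxu
      · exact Or.inl (by tauto)
    · rintro (hx | rfl)
      · tauto
      · exact huA
  have hdisjAc : Disjoint (A'ᶜ : Set V) {u} := by
    rw [Set.disjoint_right]
    rintro x rfl
    simp only [Set.mem_compl_iff, not_not]
    exact huA'
  have hE : eB G B Aᶜ = eB G B A'ᶜ + (G.neighborSet u ∩ B).ncard := by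
    rw [hAc, eB_union_right G B _ _ hdisjAc, eB_singleton_right]
  have ha' : A'.ncard = A.ncard + 1 := by
    rw [hA'def, Set.union_singleton, Set.ncard_insert_of_notMem huA (Set.toFinite _)]
  -- deltas
  have hδ : deltaAB G A B = 2 * (A.ncard : ℤ) - 2 * B.ncard + eB G B Aᶜ - o := rfl
  have hδ' : deltaAB G A' B = 2 * (A'.ncard : ℤ) - 2 * B.ncard + eB G B A'ᶜ - o' := rfl
  have hdisj' : Disjoint A' B := by
    rw [hA'def, Set.disjoint_union_left]
    exact ⟨hAB.1.1, by simpa using huB⟩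
  obtain ⟨p, hp⟩ := deltaAB_even G hAB.1.1
  obtain ⟨q, hq⟩ := deltaAB_even G hdisj'
  have hbar : deltaAB G A B ≤ -2 := hAB.1.2
  have hle : deltaAB G A' B ≤ -2 := by
    rw [hδ'] at hq ⊢
    rw [hδ] at hp hbar
    rw [ha'] at hq ⊢
    push_cast at hp hq hbar ⊢
    omega
  have hcontra := (hAB.2 A' B ⟨hdisj', hle⟩).1
  omega


lemma surgery_a [Fintype V] (G : SimpleGraph V) (A B : Set V)
    (hAB : IsBiasedBarrier G A B)
    (C : (G.induce (A ∪ B)ᶜ).ConnectedComponent)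
    (b : V) (hbB : b ∈ B)
    (h2 : 2 ≤ (G.neighborSet b ∩ compSupp G (A ∪ B)ᶜ C).ncard) : False := by
  classical
  set B' := B \ {b} with hB'def
  set U' := (A ∪ B')ᶜ with hU'def
  have hbA : b ∉ A := fun h => hAB.1.1.le_bot ⟨h, hbB⟩
  have hU' : ∀ x, x ∈ U' ↔ (x ∈ (A ∪ B)ᶜ ∨ x = b) := by
    intro x
    simp only [hU'def, hB'def, Set.mem_compl_iff, Set.mem_union, Set.mem_diff,
      Set.mem_singleton_iff]
    by_cases hxb : x = b
    · subst hxb; tauto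
    · tauto
  haveI : Fintype ((G.induce (A ∪ B)ᶜ).ConnectedComponent) := Fintype.ofFinite _
  haveI : Fintype ((G.induce U').ConnectedComponent) := Fintype.ofFinite _
  set oddP : (G.induce (A ∪ B)ᶜ).ConnectedComponent → Prop :=
    fun D => Odd (eB G (compSupp G (A ∪ B)ᶜ D) B) with hoddPdef
  set adjP : (G.induce (A ∪ B)ᶜ).ConnectedComponent → Prop :=
    fun D => ∃ y ∈ compSupp G (A ∪ B)ᶜ D, G.Adj b y with hadjPdef
  set o := Nat.card {D : (G.induce (A ∪ B)ᶜ).ConnectedComponent // oddP D} with hodef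
  set o' := Nat.card {D : (G.induce U').ConnectedComponent //
    Odd (eB G (compSupp G U' D) B')} with ho'def
  have hBsplit : B = B' ∪ {b} := by
    rw [hB'def, Set.diff_union_self, Set.union_eq_self_of_subset_right]
    simpa using hbB
  have hdisjB' : Disjoint B' ({b} : Set V) := by
    rw [Set.disjoint_right]
    rintro x rfl
    simp [hB'def]
  -- splitting o
  have hsplit := natCard_split oddP adjP
  have hsplit2 := natCard_split (fun D => oddP D ∧ adjP D) (fun D => D = C)
  have hone : Nat.card {D : (G.induce (A ∪ B)ᶜ).ConnectedComponent //
      (oddP D ∧ adjP D) ∧ D = C} ≤ 1 :=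
    natCard_le_one _ (fun X Y hX hY => hX.2.trans hY.2.symm)
  -- transfer: non-adjacent odd components survive
  have htrans : Nat.card {D : (G.induce (A ∪ B)ᶜ).ConnectedComponent //
      oddP D ∧ ¬ adjP D} ≤ o' := by
    rw [ho'def]
    refine natCard_le_of_transfer _ _ (compSupp G (A ∪ B)ᶜ) (compSupp G U') ?_
      (fun a a' _ _ h => compSupp_injective h)
    rintro D ⟨hoD, hnD⟩
    have hsub : compSupp G (A ∪ B)ᶜ D ⊆ U' := fun x hx => (hU' x).2 (Or.inl
      (compSupp_subset G (A ∪ B)ᶜ D hx))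
    have hclosed : ∀ x ∈ compSupp G (A ∪ B)ᶜ D, ∀ y ∈ U', G.Adj x y →
        y ∈ compSupp G (A ∪ B)ᶜ D := by
      intro x hx y hy hadj
      rcases (hU' y).1 hy with hyS | rfl
      · exact compSupp_closed hx hyS hadj
      · exact absurd ⟨x, hx, hadj.symm⟩ hnD
    obtain ⟨D', hD'⟩ := comp_transfer D hsub hclosed
    refine ⟨D', hD', ?_⟩
    rw [hD']
    have hzero : eB G (compSupp G (A ∪ B)ᶜ D) {b} = 0 := by
      apply eB_eq_zero
      rintro x hx y rfl hadj
      exact hnD ⟨x, hx, hadj.symm⟩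
    have : eB G (compSupp G (A ∪ B)ᶜ D) B
        = eB G (compSupp G (A ∪ B)ᶜ D) B' + eB G (compSupp G (A ∪ B)ᶜ D) {b} := by
      rw [← eB_union_right G _ _ _ hdisjB', ← hBsplit]
    have hoD' : Odd (eB G (compSupp G (A ∪ B)ᶜ D) B) := hoD
    rw [this, hzero, Nat.add_zero] at hoD'
    exact hoD'
  -- the neighbor count
  have hne : ∃ y₁ y₂, y₁ ∈ G.neighborSet b ∩ compSupp G (A ∪ B)ᶜ C ∧
      y₂ ∈ G.neighborSet b ∩ compSupp G (A ∪ B)ᶜ C ∧ y₁ ≠ y₂ :=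
    (Set.one_lt_ncard_iff (Set.toFinite _)).1 (by omega)
  obtain ⟨y₁, y₂, hy₁, hy₂, hyne⟩ := hne
  have hSsubAc : (A ∪ B)ᶜ ⊆ Aᶜ := fun x hx h => hx (Or.inl h)
  have hkey : Nat.card {D : (G.induce (A ∪ B)ᶜ).ConnectedComponent //
      (oddP D ∧ adjP D) ∧ ¬ D = C} + 2 ≤ (G.neighborSet b ∩ Aᶜ).ncard := by
    have hF : (G.neighborSet b ∩ Aᶜ).ncard = ((G.neighborSet b ∩ Aᶜ).toFinite.toFinset).card :=
      Set.ncard_eq_toFinset_card _ _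
    set F := (G.neighborSet b ∩ Aᶜ).toFinite.toFinset with hFdef
    have hy₁F : y₁ ∈ F := by
      rw [hFdef, Set.Finite.mem_toFinset]
      exact ⟨hy₁.1, hSsubAc (compSupp_subset G (A ∪ B)ᶜ C hy₁.2)⟩
    have hy₂F : y₂ ∈ F := by
      rw [hFdef, Set.Finite.mem_toFinset]
      exact ⟨hy₂.1, hSsubAc (compSupp_subset G (A ∪ B)ᶜ C hy₂.2)⟩
    set g : (G.induce (A ∪ B)ᶜ).ConnectedComponent → V := fun D =>
      if h : adjP D then h.choose else b with hgdef
    have hgspec : ∀ D, adjP D → g D ∈ compSupp G (A ∪ B)ᶜ D ∧ G.Adj b (g D) := by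
      intro D hD
      simp only [hgdef, dif_pos hD]
      exact hD.choose_spec
    have hle : Nat.card {D : (G.induce (A ∪ B)ᶜ).ConnectedComponent //
        (oddP D ∧ adjP D) ∧ ¬ D = C} ≤ Nat.card {x // x ∈ (F.erase y₁).erase y₂} := by
      apply Nat.card_le_card_of_injective
        (fun X => (⟨g X.1, ?_⟩ : {x // x ∈ (F.erase y₁).erase y₂}))
      · rintro ⟨D, hD⟩ ⟨D', hD'⟩ hEq
        have hEq' : g D = g D' := congrArg Subtype.val hEq
        obtain ⟨hg1, -⟩ := hgspec D hD.1.2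
        obtain ⟨hg1', -⟩ := hgspec D' hD'.1.2
        exact Subtype.ext (compSupp_eq_of_mem hg1 (hEq' ▸ hg1'))
      · obtain ⟨D, hD⟩ := X
        obtain ⟨⟨-, hadjD⟩, hDC⟩ := hD
        obtain ⟨hg1, hg2⟩ := hgspec D hadjD
        have hgF : g D ∈ F := by
          rw [hFdef, Set.Finite.mem_toFinset]
          exact ⟨hg2, hSsubAc (compSupp_subset G (A ∪ B)ᶜ D hg1)⟩
        have hgne : ∀ y, y ∈ compSupp G (A ∪ B)ᶜ C → g D ≠ y := by
          intro y hy hEq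
          exact hDC (compSupp_eq_of_mem (hEq ▸ hg1) hy)
        rw [Finset.mem_erase, Finset.mem_erase]
        exact ⟨hgne y₂ hy₂.2, hgne y₁ hy₁.2, hgF⟩
    rw [Nat.card_eq_finsetCard] at hle
    have e1 : ((F.erase y₁).erase y₂).card + 1 = (F.erase y₁).card :=
      Finset.card_erase_add_one (Finset.mem_erase.2 ⟨Ne.symm hyne, hy₂F⟩)
    have e2 : (F.erase y₁).card + 1 = F.card := Finset.card_erase_add_one hy₁F
    rw [hF]
    omega
  -- edge count split
  have hE : eB G B Aᶜ = eB G B' Aᶜ + (G.neighborSet b ∩ Aᶜ).ncard := by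
    rw [hBsplit, eB_union_left G _ _ _ hdisjB', eB_singleton_left]
  -- ncard of B'
  have hm : B'.ncard + 1 = B.ncard := Set.ncard_diff_singleton_add_one hbB (Set.toFinite _)
  -- deltas
  have hδ : deltaAB G A B = 2 * (A.ncard : ℤ) - 2 * B.ncard + eB G B Aᶜ - o := rfl
  have hδ' : deltaAB G A B' = 2 * (A.ncard : ℤ) - 2 * B'.ncard + eB G B' Aᶜ - o' := rfl
  have hdisj' : Disjoint A B' := hAB.1.1.mono_right Set.diff_subset
  obtain ⟨p, hp⟩ := deltaAB_even G hAB.1.1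
  obtain ⟨q, hq⟩ := deltaAB_even G hdisj'
  have hbar : deltaAB G A B ≤ -2 := hAB.1.2
  have hle : deltaAB G A B' ≤ -2 := by
    rw [hδ'] at hq ⊢
    rw [hδ] at hp hbar
    push_cast at hp hq hbar ⊢
    omega
  have hcontra := (hAB.2 A B' ⟨hdisj', hle⟩).2 rfl
  omega


end Aux

theorem stmt6 {V : Type*} [Fintype V] (G : SimpleGraph V) (A B : Set V)
    (hG : ¬ HasTwoFactor G) (hAB : IsBiasedBarrier G A B)
    (C : (G.induce (A ∪ B)ᶜ).ConnectedComponent)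
    (hodd : Odd (eB G (compSupp G (A ∪ B)ᶜ C) B)) :
    (∀ v ∈ B, (G.neighborSet v ∩ compSupp G (A ∪ B)ᶜ C).ncard ≤ 1) ∧
      (∀ v ∈ compSupp G (A ∪ B)ᶜ C, (G.neighborSet v ∩ B).ncard ≤ 1) := by
  constructor
  · intro v hv
    by_contra h
    push_neg at h
    exact surgery_a G A B hAB C v hv (by omega)
  · intro v hv
    by_contra h
    push_neg at h
    exact surgery_b G A B hAB C v hv (by omega)
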